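/- If λ = (λ_1, ..., λ_r) is a partition with distinct nonzero parts λ_1 > λ_2 > ... > λ_r > 0, then b(λ) = λ_1 − λ_r − r + 1. -/
import Mathlib


/-- The conjugate partition of the sequence `lam` (of length `r`, non-increasing on
`[1, r]`) is `(r^{a_0}, h_1^{a_1}, …, h_k^{a_k})` with `h_0 = r`,
`r > h_1 > ⋯ > h_k > 0`, `a_1, …, a_k > 0`.  Equivalently, the rows satisfy
`lam i = a_0 + ⋯ + a_t` for `h_{t+1} < i ≤ h_t` and `lam i = a_0 + ⋯ + a_k`
for `1 ≤ i ≤ h_k`. -/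
def ConjDecomp (lam : ℕ → ℕ) (r k : ℕ) (h a : ℕ → ℕ) : Prop :=
  h 0 = r ∧
  (∀ t, t < k → h (t + 1) < h t) ∧
  0 < h k ∧
  (∀ t, 1 ≤ t → t ≤ k → 0 < a t) ∧
  (∀ t, t < k → ∀ i, h (t + 1) < i → i ≤ h t →
      lam i = ∑ s ∈ Finset.range (t + 1), a s) ∧
  (∀ i, 1 ≤ i → i ≤ h k → lam i = ∑ s ∈ Finset.range (k + 1), a s)

/-- The constant `b(λ)` of Definition 1.4: `b(λ) = 0` if `k = 0`, and otherwise
`b(λ) = Σ_{t=1}^{k} (h_{t−1} − h_t)(a_t − 1) + (h_k − 1)(a_k − 1)`. -/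
def bVal (k : ℕ) (h a : ℕ → ℕ) : ℕ :=
  if k = 0 then 0
  else (∑ t ∈ Finset.Icc 1 k, (h (t - 1) - h t) * (a t - 1)) + (h k - 1) * (a k - 1)

/-- if `λ = (λ_1 > λ_2 > ⋯ > λ_r > 0)` has distinct nonzero parts, then
`b(λ) = λ_1 − λ_r − r + 1`. -/
theorem bVal_of_distinct_parts
    (r : ℕ) (hr : 1 ≤ r) (lam : ℕ → ℕ)
    (hstrict : ∀ i, 1 ≤ i → i < r → lam (i + 1) < lam i)
    (hpos : 0 < lam r)
    (k : ℕ) (h a : ℕ → ℕ)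
    (hconj : ConjDecomp lam r k h a) :
    (bVal k h a : ℤ) = (lam 1 : ℤ) - (lam r : ℤ) - (r : ℤ) + 1 := by
  obtain ⟨h0, hdec, hkpos, hapos, hblock, hlast⟩ := hconj
  by_cases hk : k = 0
  · subst hk
    have hr1 : r = 1 := by
      by_contra hne
      have e1 : lam 1 = ∑ s ∈ Finset.range 1, a s := hlast 1 (by omega) (by omega)
      have e2 : lam 2 = ∑ s ∈ Finset.range 1, a s := hlast 2 (by omega) (by omega)
      have : lam 2 < lam 1 := hstrict 1 (by omega) (by omega)
      omega
    simp [bVal, hr1]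
  · -- every step of h goes down by exactly 1
    have hht : ∀ t, t ≤ k → h t = r - t := by
      intro t ht
      induction t with
      | zero => simpa using h0
      | succ n ih =>
        have hn : n < k := by omega
        have ihn : h n = r - n := ih (by omega)
        have hlt : h (n + 1) < h n := hdec n hn
        by_contra hne
        have h2 : h (n + 1) + 2 ≤ h n := by omega
        have e1 := hblock n hn (h (n + 1) + 1) (by omega) (by omega)
        have e2 := hblock n hn (h (n + 1) + 2) (by omega) (by omega)
        have : lam (h (n + 1) + 2) < lam (h (n + 1) + 1) :=
          hstrict (h (n + 1) + 1) (by omega) (by omega)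
        omega
    have hhk : h k = r - k := hht k le_rfl
    have hk1 : h k = 1 := by
      by_contra hne
      have e1 := hlast 1 (by omega) (by omega)
      have e2 := hlast 2 (by omega) (by omega)
      have : lam 2 < lam 1 := hstrict 1 (by omega) (by omega)
      omega
    have krel : r = k + 1 := by omega
    have lam1 : lam 1 = ∑ s ∈ Finset.range (k + 1), a s := hlast 1 le_rfl (by omega)
    have lamr : lam r = a 0 := by
      have h1v : h (0 + 1) = r - 1 := hht 1 (by omega)
      have := hblock 0 (by omega) r (by omega) (by omega)
      simpa using this
    have hsum1 : ∀ t ∈ Finset.Icc 1 k, (h (t - 1) - h t) * (a t - 1) = a t - 1 := by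
      intro t ht
      simp only [Finset.mem_Icc] at ht
      have e1 := hht (t - 1) (by omega)
      have e2 := hht t ht.2
      have hone : h (t - 1) - h t = 1 := by omega
      rw [hone, one_mul]
    have hb : bVal k h a = ∑ t ∈ Finset.Icc 1 k, (a t - 1) := by
      unfold bVal
      rw [if_neg hk, Finset.sum_congr rfl hsum1, hk1]
      simp
    have hcast : ((∑ t ∈ Finset.Icc 1 k, (a t - 1) : ℕ) : ℤ)
        = ∑ t ∈ Finset.Icc 1 k, ((a t : ℤ) - 1) := by
      rw [Nat.cast_sum]
      refine Finset.sum_congr rfl fun t ht => ?_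
      simp only [Finset.mem_Icc] at ht
      have := hapos t ht.1 ht.2
      omega
    have hsplit : ∑ s ∈ Finset.range (k + 1), (a s : ℤ)
        = (a 0 : ℤ) + ∑ t ∈ Finset.Icc 1 k, (a t : ℤ) := by
      rw [Finset.range_eq_Ico,
        ← Finset.sum_Ico_consecutive _ (by omega : 0 ≤ 1) (by omega : 1 ≤ k + 1),
        Finset.Ico_add_one_right_eq_Icc]
      simp [Finset.Ico_add_one_right_eq_Icc]
    have lam1' : (lam 1 : ℤ) = ∑ s ∈ Finset.range (k + 1), (a s : ℤ) := by
      rw [lam1]; push_cast; ring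
    have hsub : ∑ t ∈ Finset.Icc 1 k, ((a t : ℤ) - 1)
        = (∑ t ∈ Finset.Icc 1 k, (a t : ℤ)) - k := by
      rw [Finset.sum_sub_distrib]
      simp [Nat.card_Icc]
    have hr' : (r : ℤ) = (k : ℤ) + 1 := by omega
    rw [hb, hcast, lam1', hsplit, lamr, hsub, hr']
    ring
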